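/- If a flow has an i.a.t stochastic arrival curve λ ∈ G with bounding function h ∈ F̄, then for every η > 0 it has a v.s.d stochastic arrival curve λ_{−η}(n) = λ(n) − η·n with bounding function h^η(x) = min{1, h(x) + (1/η)∫_x^∞ h(y) dy}; i.e., for all n ≥ 0 and x ≥ 0, P{ sup_{0≤m≤n} { λ(n−m) − η(n−m) − [a(n)−a(m)] } > x } ≤ min{1, h(x) + (1/η)∫_x^∞ h(y) dy}. -/
import Mathlib


open MeasureTheory

/-- Iterated tail integrals: `f⁽⁰⁾ = f`, `f⁽ⁿ⁺¹⁾(x) = ∫_x^∞ f⁽ⁿ⁾(y) dy`. -/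
noncomputable def tailIter (f : ℝ → ℝ) : ℕ → ℝ → ℝ
  | 0 => f
  | n + 1 => fun x => ∫ y in Set.Ici x, tailIter f n y

theorem stmt_9 {Ω : Type*} [MeasurableSpace Ω] (P : Measure Ω)
    [IsProbabilityMeasure P]
    (a : ℕ → Ω → ℝ) (ha_meas : ∀ n, Measurable (a n))
    (ha_mono : ∀ ω, Monotone fun n => a n ω)
    (lam : ℕ → ℝ) (hlam_mono : Monotone lam) (hlam_nonneg : ∀ n, 0 ≤ lam n)
    (h : ℝ → ℝ) (hh_anti : Antitone h) (hh_nonneg : ∀ x, 0 ≤ h x)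
    (hh_tails : ∀ n : ℕ, ∀ x : ℝ, 0 ≤ x → IntegrableOn (tailIter h n) (Set.Ici x))
    (hiat : ∀ m n : ℕ, m ≤ n → ∀ x : ℝ, 0 ≤ x →
      (P {ω | lam (n - m) - (a n ω - a m ω) > x}).toReal ≤ h x)
    (η : ℝ) (hη : 0 < η) :
    ∀ n : ℕ, ∀ x : ℝ, 0 ≤ x →
      (P {ω | (Finset.Iic n).sup' Finset.nonempty_Iic
          (fun m => lam (n - m) - η * ((n : ℝ) - m) - (a n ω - a m ω))
            > x}).toReal
        ≤ min 1 (h x + (1 / η) * ∫ y in Set.Ici x, h y) := by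
  intro n x hx
  have hInt : IntegrableOn h (Set.Ici x) := hh_tails 0 x hx
  refine le_min ?_ ?_
  · calc (P _).toReal ≤ (1 : ENNReal).toReal :=
          ENNReal.toReal_mono ENNReal.one_ne_top prob_le_one
      _ = 1 := ENNReal.toReal_one
  · -- union bound
    set S : ℕ → Set Ω := fun m =>
      {ω | lam (n - m) - (a n ω - a m ω) > x + η * ((n : ℝ) - m)} with hS
    have hsub : {ω | (Finset.Iic n).sup' Finset.nonempty_Iic
        (fun m => lam (n - m) - η * ((n : ℝ) - m) - (a n ω - a m ω)) > x}
        ⊆ ⋃ m ∈ Finset.Iic n, S m := by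
      intro ω hω
      rw [Set.mem_setOf_eq, gt_iff_lt, Finset.lt_sup'_iff] at hω
      obtain ⟨m, hm, hlt⟩ := hω
      refine Set.mem_biUnion hm ?_
      simp only [hS, Set.mem_setOf_eq]
      linarith
    have hle : P _ ≤ ∑ m ∈ Finset.Iic n, P (S m) :=
      (measure_mono hsub).trans (measure_biUnion_finset_le _ _)
    have hfin : ∀ m ∈ Finset.Iic n, P (S m) ≠ ⊤ := fun m _ => measure_ne_top P _
    have h1 : (P _).toReal ≤ (∑ m ∈ Finset.Iic n, P (S m)).toReal :=
      ENNReal.toReal_mono (ENNReal.sum_ne_top.mpr hfin) hle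
    rw [ENNReal.toReal_sum hfin] at h1
    have h2 : ∀ m ∈ Finset.Iic n,
        (P (S m)).toReal ≤ h (x + η * ((n : ℝ) - m)) := by
      intro m hm
      have hm' : m ≤ n := Finset.mem_Iic.mp hm
      have hnn : (0:ℝ) ≤ x + η * ((n : ℝ) - m) :=
        add_nonneg hx (mul_nonneg hη.le (sub_nonneg.mpr (by exact_mod_cast hm')))
      exact hiat m n hm' _ hnn
    have h3 : (P _).toReal ≤ ∑ m ∈ Finset.Iic n, h (x + η * ((n : ℝ) - m)) :=
      h1.trans (Finset.sum_le_sum h2)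
    -- reindex
    set G : ℕ → ℝ := fun k => h (x + η * k) with hG
    have hre : ∑ m ∈ Finset.Iic n, h (x + η * ((n : ℝ) - m))
        = ∑ k ∈ Finset.range (n + 1), G k := by
      rw [show Finset.range (n+1) = Finset.Iic n by
        ext k; simp [Finset.mem_range, Finset.mem_Iic, Nat.lt_succ_iff]]
      refine Finset.sum_nbij' (fun m => n - m) (fun m => n - m) ?_ ?_ ?_ ?_ ?_ <;>
        intro m hm <;> simp only [Finset.mem_Iic] at hm ⊢
      · omega
      · omega
      · omega
      · omega
      · simp only [hG]
        congr 2
        have : ((n - m : ℕ) : ℝ) = (n : ℝ) - m := by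
          rw [Nat.cast_sub hm]
        rw [this]
    rw [hre] at h3
    rw [Finset.sum_range_succ'] at h3
    have hG0 : G 0 = h x := by simp [hG]
    rw [hG0] at h3
    -- now bound ∑ k in range n, G (k+1) ≤ (1/η) * ∫
    have hIker : ∀ j : ℕ, IntervalIntegrable h volume
        (x + η * j) (x + η * ((j + 1 : ℕ) : ℝ)) := by
      intro j
      have hab : x + η * (j:ℝ) ≤ x + η * ((j + 1 : ℕ) : ℝ) := by push_cast; nlinarith
      refine (hInt.mono_set ?_).intervalIntegrable
      rw [Set.uIcc_of_le hab]
      intro y hy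
      simp only [Set.mem_Icc] at hy
      have hj : (0:ℝ) ≤ η * j := by positivity
      simp only [Set.mem_Ici]; linarith [hy.1]
    have key : ∀ j : ℕ, η * G (j+1) ≤
        ∫ y in (x + η * j)..(x + η * ((j + 1 : ℕ) : ℝ)), h y := by
      intro j
      have hab : x + η * (j:ℝ) ≤ x + η * ((j + 1 : ℕ) : ℝ) := by push_cast; nlinarith
      have := intervalIntegral.integral_mono_on hab
        (intervalIntegrable_const (c := G (j+1))) (hIker j) ?_
      · rwa [intervalIntegral.integral_const, smul_eq_mul,
          show x + η * ((j + 1 : ℕ) : ℝ) - (x + η * j) = η by push_cast; ring] at this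
      · intro y hy
        simp only [Set.mem_Icc] at hy
        simp only [hG]
        exact hh_anti hy.2
    have hsum : ∑ j ∈ Finset.range n, (∫ y in (x + η * j)..(x + η * ((j + 1 : ℕ) : ℝ)), h y)
        = ∫ y in x..(x + η * n), h y := by
      have := intervalIntegral.sum_integral_adjacent_intervals
        (a := fun j : ℕ => x + η * j) (μ := volume) (f := h) (n := n)
        (fun k _ => hIker k)
      simpa using this
    have htail : (∫ y in x..(x + η * n), h y) ≤ ∫ y in Set.Ici x, h y := by
      have hj : (0:ℝ) ≤ η * n := by positivity
      have hxn : x ≤ x + η * n := by linarith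
      rw [intervalIntegral.integral_of_le hxn]
      refine setIntegral_mono_set hInt ?_ ?_
      · exact Filter.Eventually.of_forall fun y => hh_nonneg y
      · exact Filter.Eventually.of_forall fun y hy => hy.1.le
    have hSsum : η * ∑ j ∈ Finset.range n, G (j+1) ≤ ∫ y in Set.Ici x, h y := by
      rw [Finset.mul_sum]
      calc ∑ j ∈ Finset.range n, η * G (j+1)
          ≤ ∑ j ∈ Finset.range n, ∫ y in (x + η * j)..(x + η * ((j + 1 : ℕ) : ℝ)), h y :=
            Finset.sum_le_sum fun j _ => key j
        _ = ∫ y in x..(x + η * n), h y := hsum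
        _ ≤ ∫ y in Set.Ici x, h y := htail
    have hfinal : ∑ j ∈ Finset.range n, G (j+1)
        ≤ (1 / η) * ∫ y in Set.Ici x, h y := by
      rw [div_mul_eq_mul_div, one_mul, le_div_iff₀ hη, mul_comm]
      exact hSsum
    linarith
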